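/- Let B > 0 and c > 0 be real numbers, let (A_ν) be a family of nonnegative real numbers indexed by multi-indices ν, and let (Υ_j)_{j≥1} be a sequence of nonnegative real numbers. Suppose that A_0 ≤ B and that for every multi-index ν ≠ 0 one has A_ν ≤ ∑_{j≥1} ∑_{k=1}^{ν_j} binom(ν_j, k) c^k Υ_j A_{ν − k·e_j}. Then for every multi-index ν, A_ν ≤ c^{|ν|} B ∑_{m ≤ ν} |m|! Υ^m ∏_{i≥1} S(ν_i, m_i). -/

import Mathlib

/-- Stirling numbers of the second kind, as real numbers:
`S(n,k) = (1/k!) ∑_{j=0}^{k} (−1)^{k−j} binom(k,j) j^n`. -/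
noncomputable def stirlingS2 (n k : ℕ) : ℝ :=
  (1 / (k.factorial : ℝ)) *
    ∑ j ∈ Finset.range (k + 1), (-1 : ℝ) ^ (k - j) * (k.choose j : ℝ) * (j : ℝ) ^ n

/-- The order `|ν| = ∑_j ν_j` of a multi-index `ν`. -/
def multiOrder (ν : ℕ →₀ ℕ) : ℕ := ν.sum fun _ k => k

/-- `Υ^m = ∏_{j : m_j ≠ 0} Υ_j^{m_j}`. -/
noncomputable def multiPow (Υ : ℕ → ℝ) (m : ℕ →₀ ℕ) : ℝ := m.prod fun j k => Υ j ^ k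

open Finset


noncomputable def dS (n k : ℕ) : ℝ :=
  ∑ j ∈ Finset.range (k + 1), (-1 : ℝ) ^ j * (k.choose j : ℝ) * (j : ℝ) ^ n

lemma neg_one_pow_sub {j k : ℕ} (h : j ≤ k) : (-1 : ℝ) ^ (k - j) = (-1) ^ k * (-1) ^ j := by
  have h2 : ((-1 : ℝ) ^ j) * ((-1 : ℝ) ^ j) = 1 := by
    rw [← pow_add]; exact Even.neg_one_pow ⟨j, rfl⟩
  calc (-1 : ℝ) ^ (k - j) = (-1 : ℝ) ^ (k - j) * (((-1:ℝ)^j) * ((-1:ℝ)^j)) := by rw [h2, mul_one]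
    _ = ((-1 : ℝ) ^ (k - j) * (-1:ℝ)^j) * (-1:ℝ)^j := by ring
    _ = (-1)^k * (-1)^j := by rw [← pow_add, Nat.sub_add_cancel h]

lemma stirling_eq_dS (n k : ℕ) :
    stirlingS2 n k = (-1 : ℝ) ^ k * dS n k / (k.factorial : ℝ) := by
  unfold stirlingS2 dS
  have h : ∑ j ∈ range (k + 1), (-1 : ℝ) ^ (k - j) * (k.choose j : ℝ) * (j : ℝ) ^ n
      = (-1 : ℝ) ^ k * ∑ j ∈ range (k + 1), (-1 : ℝ) ^ j * (k.choose j : ℝ) * (j : ℝ) ^ n := by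
    rw [mul_sum]
    apply sum_congr rfl
    intro j hj
    rw [mem_range] at hj
    rw [neg_one_pow_sub (Nat.lt_succ_iff.mp hj)]
    ring
  rw [h]; ring

lemma stirling_zero_zero : stirlingS2 0 0 = 1 := by
  simp [stirlingS2]

lemma stirling_zero_right {n : ℕ} (hn : n ≠ 0) : stirlingS2 n 0 = 0 := by
  simp [stirlingS2, zero_pow hn]

lemma dS_zero_left {k : ℕ} (hk : k ≠ 0) : dS 0 k = 0 := by
  have h := Int.alternating_sum_range_choose (n := k)
  rw [if_neg hk] at h
  have h2 := congrArg (Int.cast : ℤ → ℝ) h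
  push_cast at h2
  unfold dS
  simpa using h2

lemma binom_aux (x : ℝ) (n : ℕ) :
    ∑ i ∈ Icc 1 n, (n.choose i : ℝ) * x ^ (n - i) = (x + 1) ^ n - x ^ n := by
  have hb : (x + 1) ^ n = ∑ k ∈ range (n + 1), x ^ k * (n.choose k : ℝ) := by
    rw [add_pow]; apply sum_congr rfl; intro k _; ring
  have hre : ∑ i ∈ Icc 1 n, (n.choose i : ℝ) * x ^ (n - i)
      = ∑ k ∈ range n, x ^ k * (n.choose k : ℝ) := by
    apply Finset.sum_nbij' (fun i => n - i) (fun k => n - k)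
    · intro a ha; rw [mem_Icc] at ha; rw [mem_range]; omega
    · intro a ha; rw [mem_range] at ha; rw [mem_Icc]; omega
    · intro a ha; rw [mem_Icc] at ha; omega
    · intro a ha; rw [mem_range] at ha; omega
    · intro a ha
      rw [mem_Icc] at ha
      rw [Nat.choose_symm ha.2]
      ring
  rw [hre, hb, Finset.sum_range_succ, Nat.choose_self]
  ring

lemma dS_succ {n : ℕ} (hn : 1 ≤ n) (k : ℕ) :
    dS n (k + 1) = -∑ j ∈ range (k + 1),
      (-1 : ℝ) ^ j * (k.choose j : ℝ) * (((j : ℝ) + 1) ^ n - (j : ℝ) ^ n) := by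
  have hn0 : n ≠ 0 := by omega
  set S1 := ∑ j ∈ range (k + 1), (-1:ℝ) ^ j * (k.choose j : ℝ) * ((j:ℝ)+1) ^ n with hS1
  set S2 := ∑ j ∈ range (k + 1), (-1:ℝ) ^ j * (k.choose (j+1) : ℝ) * ((j:ℝ)+1) ^ n with hS2
  have hsecond : S2 = -dS n k := by
    have e1 : S2 = -∑ j ∈ range (k + 1),
        (-1:ℝ) ^ (j+1) * (k.choose (j+1) : ℝ) * (((j+1 : ℕ)):ℝ) ^ n := by
      rw [← Finset.sum_neg_distrib]
      apply sum_congr rfl; intro j _; push_cast; ring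
    have e2 : ∑ j ∈ range (k + 1), (-1:ℝ) ^ (j+1) * (k.choose (j+1) : ℝ) * (((j+1 : ℕ)):ℝ) ^ n
        = ∑ j ∈ range (k + 2), (-1:ℝ) ^ j * (k.choose j : ℝ) * ((j : ℕ):ℝ) ^ n := by
      rw [Finset.sum_range_succ' (fun j => (-1:ℝ) ^ j * (k.choose j : ℝ) * ((j : ℕ):ℝ) ^ n) (k+1)]
      simp [zero_pow hn0]
    have e3 : ∑ j ∈ range (k + 2), (-1:ℝ) ^ j * (k.choose j : ℝ) * ((j : ℕ):ℝ) ^ n = dS n k := by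
      rw [Finset.sum_range_succ]
      simp [dS]
    rw [e1, e2, e3]
  have hmain : dS n (k + 1) = -S1 - S2 := by
    unfold dS
    rw [Finset.sum_range_succ']
    simp only [Nat.cast_zero, zero_pow hn0, mul_zero, add_zero]
    have : ∀ j ∈ range (k + 1), (-1:ℝ) ^ (j+1) * ((k+1).choose (j+1) : ℝ) * ((j+1 : ℕ):ℝ) ^ n
        = (-((-1:ℝ) ^ j * (k.choose j : ℝ) * ((j:ℝ)+1) ^ n))
          + (-((-1:ℝ) ^ j * (k.choose (j+1) : ℝ) * ((j:ℝ)+1) ^ n)) := by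
      intro j _
      rw [Nat.choose_succ_succ]
      push_cast
      ring
    rw [Finset.sum_congr rfl this, Finset.sum_add_distrib]
    simp only [Finset.sum_neg_distrib]
    rw [← hS2]
    ring
  have hexp : ∑ j ∈ range (k + 1), (-1 : ℝ) ^ j * (k.choose j : ℝ) * (((j : ℝ) + 1) ^ n - (j : ℝ) ^ n)
      = S1 - dS n k := by
    unfold dS
    rw [hS1, ← Finset.sum_sub_distrib]
    apply sum_congr rfl; intro j _; ring
  rw [hmain, hsecond, hexp]; ring

lemma stirling_rec {n : ℕ} (hn : 1 ≤ n) (k : ℕ) :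
    ((k : ℝ) + 1) * stirlingS2 n (k + 1)
      = ∑ i ∈ Icc 1 n, (n.choose i : ℝ) * stirlingS2 (n - i) k := by
  have hk1 : ((k+1).factorial : ℝ) = ((k:ℝ)+1) * (k.factorial : ℝ) := by
    rw [Nat.factorial_succ]; push_cast; ring
  have hkf : (k.factorial : ℝ) ≠ 0 := by positivity
  have hrhs : ∑ i ∈ Icc 1 n, (n.choose i : ℝ) * stirlingS2 (n - i) k
      = (-1:ℝ)^k / (k.factorial : ℝ) * ∑ j ∈ range (k + 1),
          (-1 : ℝ) ^ j * (k.choose j : ℝ) * (((j : ℝ) + 1) ^ n - (j : ℝ) ^ n) := by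
    have h1 : ∀ i ∈ Icc 1 n, (n.choose i : ℝ) * stirlingS2 (n - i) k
        = (-1:ℝ)^k / (k.factorial : ℝ) * ∑ j ∈ range (k + 1),
            (-1 : ℝ) ^ j * (k.choose j : ℝ) * ((n.choose i : ℝ) * (j : ℝ) ^ (n - i)) := by
      intro i _
      rw [stirling_eq_dS]
      unfold dS
      rw [mul_sum, Finset.sum_div, mul_sum, mul_sum]
      apply sum_congr rfl; intro j _; ring
    rw [Finset.sum_congr rfl h1, ← Finset.mul_sum, Finset.sum_comm]
    congr 1
    apply sum_congr rfl
    intro j _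
    rw [← Finset.mul_sum, binom_aux]
  rw [hrhs, stirling_eq_dS, dS_succ hn k, hk1]
  field_simp
  ring

lemma stirling_eq_zero {n k : ℕ} (h : n < k) : stirlingS2 n k = 0 := by
  induction n using Nat.strong_induction_on generalizing k with
  | _ n ih =>
    rcases Nat.eq_zero_or_pos n with hn | hn
    · subst hn
      rw [stirling_eq_dS, dS_zero_left (by omega)]
      simp
    · obtain ⟨k', rfl⟩ : ∃ k', k = k' + 1 := ⟨k - 1, by omega⟩
      have hrec := stirling_rec hn k'
      have hz : ∀ i ∈ Icc 1 n, (n.choose i : ℝ) * stirlingS2 (n - i) k' = 0 := by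
        intro i hi
        rw [mem_Icc] at hi
        rw [ih (n - i) (by omega) (by omega), mul_zero]
      rw [Finset.sum_congr rfl hz, Finset.sum_const_zero] at hrec
      have hne : ((k':ℝ)+1) ≠ 0 := by positivity
      rcases mul_eq_zero.mp hrec with h | h
      · exact absurd h hne
      · exact h

lemma multiOrder_add (m m' : ℕ →₀ ℕ) : multiOrder (m + m') = multiOrder m + multiOrder m' :=
  Finsupp.sum_add_index' (fun _ => rfl) (fun _ _ _ => rfl)

lemma multiOrder_single (j k : ℕ) : multiOrder (Finsupp.single j k) = k :=
  Finsupp.sum_single_index rfl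

lemma multiOrder_zero : multiOrder 0 = 0 := rfl

lemma multiPow_add (Υ : ℕ → ℝ) (m m' : ℕ →₀ ℕ) :
    multiPow Υ (m + m') = multiPow Υ m * multiPow Υ m' :=
  Finsupp.prod_add_index' (fun a => pow_zero _) (fun a b c => pow_add _ _ _)

lemma multiPow_single (Υ : ℕ → ℝ) (j k : ℕ) : multiPow Υ (Finsupp.single j k) = Υ j ^ k :=
  Finsupp.prod_single_index (pow_zero _)

lemma multiOrder_eq_sum {m : ℕ →₀ ℕ} {s : Finset ℕ} (hs : m.support ⊆ s) :
    multiOrder m = ∑ j ∈ s, m j :=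
  Finsupp.sum_of_support_subset m hs _ (fun _ _ => rfl)

noncomputable def Tf (Υ : ℕ → ℝ) (ν : ℕ →₀ ℕ) : ℝ :=
  ∑ m ∈ Finset.Iic ν, ((multiOrder m).factorial : ℝ) * multiPow Υ m *
      ∏ i ∈ ν.support, stirlingS2 (ν i) (m i)

lemma Tf_eq_over (Υ : ℕ → ℝ) (ν : ℕ →₀ ℕ) {s : Finset ℕ} (hs : ν.support ⊆ s) :
    Tf Υ ν = ∑ m ∈ Finset.Iic ν, ((multiOrder m).factorial : ℝ) * multiPow Υ m *
      ∏ i ∈ s, stirlingS2 (ν i) (m i) := by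
  apply Finset.sum_congr rfl
  intro m hm
  rw [Finset.mem_Iic] at hm
  congr 1
  apply Finset.prod_subset hs
  intro i _ hi
  rw [Finsupp.notMem_support_iff] at hi
  have hmi : m i = 0 := by
    have := (Finsupp.le_def.mp hm) i
    omega
  rw [hi, hmi, stirling_zero_zero]

lemma key (Υ : ℕ → ℝ) (ν : ℕ →₀ ℕ) (hν : ν ≠ 0) :
    ∑ j ∈ ν.support, Υ j * ∑ k ∈ Finset.Icc 1 (ν j),
        ((ν j).choose k : ℝ) * Tf Υ (ν - Finsupp.single j k) = Tf Υ ν := by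
  classical
  set s := ν.support with hs
  set w : (ℕ →₀ ℕ) → ℝ := fun m => ((multiOrder m).factorial : ℝ) * multiPow Υ m with hw
  -- step 1 : rewrite Tf of ν - single j k as a sum over Iic ν
  have step1 : ∀ j ∈ s, ∀ k ∈ Finset.Icc 1 (ν j),
      Tf Υ (ν - Finsupp.single j k)
        = ∑ m ∈ Finset.Iic ν, w m * (stirlingS2 (ν j - k) (m j) *
            ∏ i ∈ s.erase j, stirlingS2 (ν i) (m i)) := by
    intro j hj k hk
    have hsub : (ν - Finsupp.single j k).support ⊆ s := Finsupp.support_tsub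
    rw [Tf_eq_over Υ _ hsub]
    rw [Finset.sum_subset (Finset.Iic_subset_Iic.mpr tsub_le_self)]
    · apply Finset.sum_congr rfl
      intro m hm
      rw [← Finset.mul_prod_erase s _ hj]
      have h1 : (ν - Finsupp.single j k) j = ν j - k := by
        rw [Finsupp.tsub_apply, Finsupp.single_apply, if_pos rfl]
      have h2 : ∀ i ∈ s.erase j, stirlingS2 ((ν - Finsupp.single j k) i) (m i)
          = stirlingS2 (ν i) (m i) := by
        intro i hi
        have hij : i ≠ j := (Finset.mem_erase.mp hi).1
        rw [Finsupp.tsub_apply, Finsupp.single_apply, if_neg (Ne.symm hij), Nat.sub_zero]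
      rw [h1, Finset.prod_congr rfl h2]
    · intro m hm hnm
      rw [Finset.mem_Iic] at hm hnm
      have hmj : (ν - Finsupp.single j k) j < m j := by
        by_contra hcon
        push_neg at hcon
        apply hnm
        rw [Finsupp.le_def]
        intro i
        rcases eq_or_ne i j with rfl | hij
        · exact hcon
        · rw [Finsupp.tsub_apply, Finsupp.single_apply, if_neg (Ne.symm hij), Nat.sub_zero]
          exact Finsupp.le_def.mp hm i
      have : stirlingS2 ((ν - Finsupp.single j k) j) (m j) = 0 := stirling_eq_zero hmj
      rw [Finset.prod_eq_zero hj this, mul_zero]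
  -- step 2 : swap sums and use the Stirling recurrence
  have step2 : ∀ j ∈ s,
      Υ j * ∑ k ∈ Finset.Icc 1 (ν j), ((ν j).choose k : ℝ) * Tf Υ (ν - Finsupp.single j k)
        = ∑ m ∈ Finset.Iic ν, Υ j * (((m j : ℝ) + 1) * stirlingS2 (ν j) (m j + 1))
            * (w m * ∏ i ∈ s.erase j, stirlingS2 (ν i) (m i)) := by
    intro j hj
    have hνj : 1 ≤ ν j := Nat.one_le_iff_ne_zero.mpr (Finsupp.mem_support_iff.mp hj)
    rw [Finset.sum_congr rfl (fun k hk => by rw [step1 j hj k hk])]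
    rw [Finset.mul_sum]
    rw [Finset.sum_congr rfl (fun k _ => by rw [Finset.mul_sum, Finset.mul_sum])]
    rw [Finset.sum_comm]
    apply Finset.sum_congr rfl
    intro m _
    have hfac : ∀ k ∈ Finset.Icc 1 (ν j),
        Υ j * (((ν j).choose k : ℝ) * (w m * (stirlingS2 (ν j - k) (m j) *
            ∏ i ∈ s.erase j, stirlingS2 (ν i) (m i))))
        = (Υ j * (w m * ∏ i ∈ s.erase j, stirlingS2 (ν i) (m i)))
            * (((ν j).choose k : ℝ) * stirlingS2 (ν j - k) (m j)) := by
      intro k _; ring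
    rw [Finset.sum_congr rfl hfac, ← Finset.mul_sum, ← stirling_rec hνj (m j)]
    ring
  -- step 3 : reindex m ↦ m + single j 1
  have step3 : ∀ j ∈ s,
      (∑ m ∈ Finset.Iic ν, Υ j * (((m j : ℝ) + 1) * stirlingS2 (ν j) (m j + 1))
          * (w m * ∏ i ∈ s.erase j, stirlingS2 (ν i) (m i)))
        = ∑ m ∈ Finset.Iic ν, (m j : ℝ) *
            (((multiOrder m - 1).factorial : ℝ) * multiPow Υ m) *
            ∏ i ∈ s, stirlingS2 (ν i) (m i) := by
    intro j hj
    have hL : ∀ m ∈ Finset.Iic ν,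
        Υ j * (((m j : ℝ) + 1) * stirlingS2 (ν j) (m j + 1))
          * (w m * ∏ i ∈ s.erase j, stirlingS2 (ν i) (m i)) ≠ 0 → m j < ν j := by
      intro m _ hne
      by_contra hcon
      push_neg at hcon
      apply hne
      rw [stirling_eq_zero (show ν j < m j + 1 by omega)]
      ring
    have hR : ∀ m ∈ Finset.Iic ν,
        (m j : ℝ) * (((multiOrder m - 1).factorial : ℝ) * multiPow Υ m) *
            ∏ i ∈ s, stirlingS2 (ν i) (m i) ≠ 0 → 1 ≤ m j := by
      intro m _ hne
      by_contra hcon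
      push_neg at hcon
      apply hne
      have hz : m j = 0 := by omega
      rw [hz]
      norm_num
    rw [← Finset.sum_filter_of_ne hL, ← Finset.sum_filter_of_ne hR]
    apply Finset.sum_nbij' (fun m => m + Finsupp.single j 1) (fun m => m - Finsupp.single j 1)
    · intro m hm
      rw [Finset.mem_filter, Finset.mem_Iic] at hm ⊢
      constructor
      · rw [Finsupp.le_def]
        intro i
        rw [Finsupp.add_apply, Finsupp.single_apply]
        rcases eq_or_ne j i with rfl | hij
        · rw [if_pos rfl]; omega
        · rw [if_neg hij]
          simpa using Finsupp.le_def.mp hm.1 i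
      · rw [Finsupp.add_apply, Finsupp.single_apply, if_pos rfl]; omega
    · intro m hm
      rw [Finset.mem_filter, Finset.mem_Iic] at hm ⊢
      constructor
      · exact le_trans tsub_le_self hm.1
      · rw [Finsupp.tsub_apply, Finsupp.single_apply, if_pos rfl]
        have h1 := Finsupp.le_def.mp hm.1 j
        have h2 := hm.2
        omega
    · intro m _
      exact add_tsub_cancel_right m (Finsupp.single j 1)
    · intro m hm
      rw [Finset.mem_filter] at hm
      exact tsub_add_cancel_of_le (Finsupp.single_le_iff.mpr hm.2)
    · intro m hm
      rw [Finset.mem_filter, Finset.mem_Iic] at hm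
      set m' := m + Finsupp.single j 1 with hm'
      have hm'j : m' j = m j + 1 := by
        rw [hm', Finsupp.add_apply, Finsupp.single_apply, if_pos rfl]
      have horder : multiOrder m' = multiOrder m + 1 := by
        rw [hm', multiOrder_add, multiOrder_single]
      have hpow : multiPow Υ m' = multiPow Υ m * Υ j := by
        rw [hm', multiPow_add, multiPow_single, pow_one]
      have hprod : ∏ i ∈ s, stirlingS2 (ν i) (m' i)
          = stirlingS2 (ν j) (m j + 1) * ∏ i ∈ s.erase j, stirlingS2 (ν i) (m i) := by
        rw [← Finset.mul_prod_erase s _ hj, hm'j]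
        congr 1
        apply Finset.prod_congr rfl
        intro i hi
        have hij : i ≠ j := (Finset.mem_erase.mp hi).1
        rw [hm', Finsupp.add_apply, Finsupp.single_apply, if_neg (Ne.symm hij), add_zero]
      rw [hprod, hm'j, horder, hpow, hw]
      simp only [Nat.add_sub_cancel]
      push_cast
      ring
  -- step 4 : sum over j and identify with Tf
  have hsne : s.Nonempty := Finsupp.support_nonempty_iff.mpr hν
  calc ∑ j ∈ s, Υ j * ∑ k ∈ Finset.Icc 1 (ν j),
        ((ν j).choose k : ℝ) * Tf Υ (ν - Finsupp.single j k)
      = ∑ j ∈ s, ∑ m ∈ Finset.Iic ν, (m j : ℝ) *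
            (((multiOrder m - 1).factorial : ℝ) * multiPow Υ m) *
            ∏ i ∈ s, stirlingS2 (ν i) (m i) := by
        apply Finset.sum_congr rfl
        intro j hj
        rw [step2 j hj, step3 j hj]
    _ = ∑ m ∈ Finset.Iic ν, ∑ j ∈ s, (m j : ℝ) *
            (((multiOrder m - 1).factorial : ℝ) * multiPow Υ m) *
            ∏ i ∈ s, stirlingS2 (ν i) (m i) := Finset.sum_comm
    _ = Tf Υ ν := by
        apply Finset.sum_congr rfl
        intro m hm
        rw [Finset.mem_Iic] at hm
        rw [← hs]
        have hsupp : m.support ⊆ s := Finsupp.support_monotone hm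
        have hsum : ((multiOrder m : ℕ) : ℝ) = ∑ j ∈ s, (m j : ℝ) := by
          rw [multiOrder_eq_sum hsupp]
          push_cast
          rfl
        rw [← Finset.sum_mul, ← Finset.sum_mul, ← hsum]
        rcases Nat.eq_zero_or_pos (multiOrder m) with h0 | hpos
        · -- the m = 0 term : both sides vanish
          obtain ⟨j₀, hj₀⟩ := hsne
          have hmj₀ : m j₀ = 0 := by
            have : ∑ j ∈ s, m j = 0 := by rw [← multiOrder_eq_sum hsupp, h0]
            exact (Finset.sum_eq_zero_iff.mp this) j₀ hj₀
          have hνj₀ : ν j₀ ≠ 0 := Finsupp.mem_support_iff.mp hj₀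
          have hzero : ∏ i ∈ s, stirlingS2 (ν i) (m i) = 0 := by
            apply Finset.prod_eq_zero hj₀
            rw [hmj₀]
            exact stirling_zero_right hνj₀
          rw [hzero, mul_zero, mul_zero]
        · have hfact : ((multiOrder m : ℕ) : ℝ) * (((multiOrder m - 1).factorial : ℕ) : ℝ)
              = (((multiOrder m).factorial : ℕ) : ℝ) := by
            rw [← Nat.cast_mul, Nat.mul_factorial_pred hpos.ne']
          calc ((multiOrder m : ℕ) : ℝ) * ((((multiOrder m - 1).factorial : ℕ) : ℝ) *
                multiPow Υ m) * ∏ i ∈ s, stirlingS2 (ν i) (m i)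
              = (((multiOrder m : ℕ) : ℝ) * (((multiOrder m - 1).factorial : ℕ) : ℝ)) *
                multiPow Υ m * ∏ i ∈ s, stirlingS2 (ν i) (m i) := by ring
            _ = (((multiOrder m).factorial : ℕ) : ℝ) * multiPow Υ m *
                ∏ i ∈ s, stirlingS2 (ν i) (m i) := by rw [hfact]


lemma multiOrder_sub_add {ν σ : ℕ →₀ ℕ} (h : σ ≤ ν) :
    multiOrder (ν - σ) + multiOrder σ = multiOrder ν := by
  conv_rhs => rw [← tsub_add_cancel_of_le h]
  rw [multiOrder_add]

lemma multiOrder_eq_zero {ν : ℕ →₀ ℕ} (h : multiOrder ν = 0) : ν = 0 := by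
  rw [multiOrder_eq_sum (Finset.Subset.refl _)] at h
  have := Finset.sum_eq_zero_iff.mp h
  have hsupp : ν.support = ∅ := by
    by_contra hne
    obtain ⟨j, hj⟩ := Finset.nonempty_of_ne_empty hne
    exact (Finsupp.mem_support_iff.mp hj) (this j hj)
  exact Finsupp.support_eq_empty.mp hsupp

lemma Tf_zero (Υ : ℕ → ℝ) : Tf Υ 0 = 1 := by
  have hIic : Finset.Iic (0 : ℕ →₀ ℕ) = {0} := by
    ext m
    simp [Finset.mem_Iic, le_zero_iff]
  unfold Tf
  rw [hIic, Finset.sum_singleton]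
  simp [multiOrder_zero, multiPow]

theorem stmt_0 (B c : ℝ) (hB : 0 < B) (hc : 0 < c)
    (A : (ℕ →₀ ℕ) → ℝ) (hA : ∀ ν, 0 ≤ A ν)
    (Υ : ℕ → ℝ) (hΥ : ∀ j, 0 ≤ Υ j)
    (h0 : A 0 ≤ B)
    (hrec : ∀ ν : ℕ →₀ ℕ, ν ≠ 0 →
      A ν ≤ ∑ j ∈ ν.support, ∑ k ∈ Finset.Icc 1 (ν j),
        ((ν j).choose k : ℝ) * c ^ k * Υ j * A (ν - Finsupp.single j k)) :
    ∀ ν : ℕ →₀ ℕ,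
      A ν ≤ c ^ multiOrder ν * B *
        ∑ m ∈ Finset.Iic ν,
          ((multiOrder m).factorial : ℝ) * multiPow Υ m *
            ∏ i ∈ ν.support, stirlingS2 (ν i) (m i) := by
  have base : A 0 ≤ c ^ multiOrder 0 * B * Tf Υ 0 := by
    rw [Tf_zero, multiOrder_zero, pow_zero, one_mul, mul_one]
    exact h0
  have main : ∀ N : ℕ, ∀ ν : ℕ →₀ ℕ, multiOrder ν ≤ N →
      A ν ≤ c ^ multiOrder ν * B * Tf Υ ν := by
    intro N
    induction N with
    | zero =>
      intro ν hν
      have h0ν : ν = 0 := multiOrder_eq_zero (Nat.le_zero.mp hν)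
      subst h0ν
      exact base
    | succ N ih =>
      intro ν hν
      rcases eq_or_ne ν 0 with rfl | hne
      · exact base
      calc A ν ≤ ∑ j ∈ ν.support, ∑ k ∈ Finset.Icc 1 (ν j),
            ((ν j).choose k : ℝ) * c ^ k * Υ j * A (ν - Finsupp.single j k) := hrec ν hne
        _ ≤ ∑ j ∈ ν.support, ∑ k ∈ Finset.Icc 1 (ν j),
            ((ν j).choose k : ℝ) * c ^ k * Υ j *
              (c ^ multiOrder (ν - Finsupp.single j k) * B * Tf Υ (ν - Finsupp.single j k)) := by
          apply Finset.sum_le_sum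
          intro j hj
          apply Finset.sum_le_sum
          intro k hk
          rw [Finset.mem_Icc] at hk
          have hσ : Finsupp.single j k ≤ ν := Finsupp.single_le_iff.mpr hk.2
          have horder : multiOrder (ν - Finsupp.single j k) + k = multiOrder ν := by
            have := multiOrder_sub_add hσ
            rwa [multiOrder_single] at this
          have hN : multiOrder (ν - Finsupp.single j k) ≤ N := by omega
          have hnn : (0:ℝ) ≤ ((ν j).choose k : ℝ) * c ^ k * Υ j := by
            have := hΥ j
            positivity
          exact mul_le_mul_of_nonneg_left (ih _ hN) hnn
        _ = c ^ multiOrder ν * B * ∑ j ∈ ν.support, Υ j * ∑ k ∈ Finset.Icc 1 (ν j),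
              ((ν j).choose k : ℝ) * Tf Υ (ν - Finsupp.single j k) := by
          rw [Finset.mul_sum]
          apply Finset.sum_congr rfl
          intro j hj
          rw [Finset.mul_sum, Finset.mul_sum]
          apply Finset.sum_congr rfl
          intro k hk
          rw [Finset.mem_Icc] at hk
          have hσ : Finsupp.single j k ≤ ν := Finsupp.single_le_iff.mpr hk.2
          have horder : multiOrder (ν - Finsupp.single j k) + k = multiOrder ν := by
            have := multiOrder_sub_add hσ
            rwa [multiOrder_single] at this
          have hpow : c ^ multiOrder (ν - Finsupp.single j k) * c ^ k = c ^ multiOrder ν := by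
            rw [← pow_add, horder]
          rw [← hpow]
          ring
        _ = c ^ multiOrder ν * B * Tf Υ ν := by rw [key Υ ν hne]
  intro ν
  exact main (multiOrder ν) ν le_rfl
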